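/- Let Ω be a Polish space with a Borel probability measure P on its Borel σ-algebra 𝓕, let (E, Σ) be a measurable space, and let 1 ≤ p < ∞. Suppose ρ : E × ℝ → ℝ satisfies: (i) for every e ∈ E the map x ↦ ρ(e, x) is continuous; (ii) for every x ∈ ℝ the map e ↦ ρ(e, x) is measurable; (iii) there is a constant C > 0 with |ρ(e, x)| ≤ C(1 + |x|) for all (e, x) ∈ E × ℝ. Then for any measurable map X : E → L^p(Ω, 𝓕, P) (with L^p carrying the Borel σ-algebra of its norm topology), for each e ∈ E the function ω ↦ ρ(e, X(e)(ω)) belongs to L^p(Ω, 𝓕, P) (where X(e)(·) denotes any representative of the class X(e)), and the resulting map e ↦ [ω ↦ ρ(e, X(e)(ω))] ∈ L^p(Ω, 𝓕, P) is measurable. -/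

import Mathlib

open MeasureTheory ENNReal
open Filter Topology Set

section Helpers

variable {Ω : Type*} [MeasurableSpace Ω] {P : Measure Ω}
variable {E : Type*} [MeasurableSpace E]
variable {p : ℝ≥0∞}

/-- Membership of `φ ∘ f` in `ℒp` from continuity and linear growth of `φ`. -/
lemma memLp_comp_growth [IsFiniteMeasure P] {φ : ℝ → ℝ} (hφ : Continuous φ)
    {C : ℝ} (hC : 0 ≤ C) (hg : ∀ x, |φ x| ≤ C * (1 + |x|))
    {f : Ω → ℝ} (hf : MemLp f p P) : MemLp (fun ω => φ (f ω)) p P := by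
  have hmajor : MemLp (fun ω => C * (1 + ‖f ω‖)) p P :=
    ((memLp_const (1 : ℝ)).add hf.norm).const_mul C
  refine hmajor.of_le (hφ.comp_aestronglyMeasurable hf.1) (ae_of_all _ fun ω => ?_)
  have h1 : (0 : ℝ) ≤ C * (1 + ‖f ω‖) := mul_nonneg hC (by positivity)
  calc ‖φ (f ω)‖ = |φ (f ω)| := rfl
    _ ≤ C * (1 + |f ω|) := hg _
    _ ≤ ‖C * (1 + ‖f ω‖)‖ := by
        rw [Real.norm_eq_abs (C * _), abs_of_nonneg h1, Real.norm_eq_abs]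

/-- Continuous post-composition preserves convergence in measure
(over a finite measure space). -/
lemma tendstoInMeasure_comp_continuous [IsFiniteMeasure P] {φ : ℝ → ℝ} (hφ : Continuous φ)
    {u : ℕ → Ω → ℝ} {v : Ω → ℝ} (hu : ∀ n, AEStronglyMeasurable (u n) P)
    (h : TendstoInMeasure P u atTop v) :
    TendstoInMeasure P (fun n ω => φ (u n ω)) atTop (fun ω => φ (v ω)) := by
  intro ε hε
  refine tendsto_of_subseq_tendsto fun ns hns => ?_
  have hsub : TendstoInMeasure P (fun k => u (ns k)) atTop v := fun δ hδ => (h δ hδ).comp hns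
  obtain ⟨ms, -, hms⟩ := hsub.exists_seq_tendsto_ae
  have hae : ∀ᵐ ω ∂P, Tendsto (fun k => φ (u (ns (ms k)) ω)) atTop (𝓝 (φ (v ω))) :=
    hms.mono fun ω hω => (hφ.tendsto _).comp hω
  exact ⟨ms, tendstoInMeasure_of_tendsto_ae
    (fun k => hφ.comp_aestronglyMeasurable (hu _)) hae ε hε⟩

/-- Uniform integrability of `φ ∘ u n` from a linear growth bound on `φ` and uniform
integrability of `u`. -/
lemma unifIntegrable_comp_growth [IsFiniteMeasure P] (hp1 : 1 ≤ p) (hp2 : p ≠ ∞)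
    {φ : ℝ → ℝ} {C : ℝ} (hC : 0 < C) (hg : ∀ x, |φ x| ≤ C * (1 + |x|))
    {u : ℕ → Ω → ℝ} (hu : ∀ n, AEStronglyMeasurable (u n) P)
    (hui : UnifIntegrable u p P) :
    UnifIntegrable (fun n ω => φ (u n ω)) p P := by
  intro ε hε
  have hε2 : 0 < ε / 2 := by positivity
  obtain ⟨δ₁, hδ₁, h₁⟩ := unifIntegrable_const (μ := P) hp1 hp2 (memLp_const C) hε2
  have hεC : 0 < ε / (2 * C) := by positivity
  obtain ⟨δ₂, hδ₂, h₂⟩ := hui hεC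
  refine ⟨min δ₁ δ₂, lt_min hδ₁ hδ₂, fun i s hs hμs => ?_⟩
  have hμ1 : P s ≤ ENNReal.ofReal δ₁ := hμs.trans (ENNReal.ofReal_le_ofReal (min_le_left _ _))
  have hμ2 : P s ≤ ENNReal.ofReal δ₂ := hμs.trans (ENNReal.ofReal_le_ofReal (min_le_right _ _))
  have hpt : ∀ ω, ‖s.indicator (fun ω => φ (u i ω)) ω‖ ≤
      ‖((s.indicator fun _ => C) + (s.indicator fun ω => C * ‖u i ω‖)) ω‖ := by
    intro ω
    by_cases hω : ω ∈ s
    · simp only [Pi.add_apply, Set.indicator_of_mem hω, Real.norm_eq_abs]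
      rw [abs_of_nonneg (by positivity : (0:ℝ) ≤ C + C * |u i ω|)]
      calc |φ (u i ω)| ≤ C * (1 + |u i ω|) := hg _
        _ = C + C * |u i ω| := by ring
    · simp [Set.indicator_of_notMem hω]
  have hsmul : eLpNorm (s.indicator fun ω => C * ‖u i ω‖) p P ≤ ENNReal.ofReal (ε / 2) := by
    have heq : (s.indicator fun ω => C * ‖u i ω‖) = fun ω => C * ‖s.indicator (u i) ω‖ := by
      funext ω
      by_cases hω : ω ∈ s <;> simp [Set.indicator_of_mem, Set.indicator_of_notMem, hω]
    have h2' := h₂ i s hs hμ2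
    calc eLpNorm (s.indicator fun ω => C * ‖u i ω‖) p P
        = eLpNorm (C • fun ω => ‖s.indicator (u i) ω‖) p P := by
          rw [heq]; rfl
      _ = ‖C‖₊ * eLpNorm (fun ω => ‖s.indicator (u i) ω‖) p P := by
          rw [eLpNorm_const_smul, enorm_eq_nnnorm]
      _ = ‖C‖₊ * eLpNorm (s.indicator (u i)) p P := by rw [eLpNorm_norm]
      _ ≤ ENNReal.ofReal C * ENNReal.ofReal (ε / (2 * C)) := by
          refine mul_le_mul ?_ h2' zero_le' zero_le'
          simp [← ENNReal.ofReal_coe_nnreal, Real.nnnorm_of_nonneg hC.le]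
      _ = ENNReal.ofReal (C * (ε / (2 * C))) := by
          rw [ENNReal.ofReal_mul hC.le]
      _ = ENNReal.ofReal (ε / 2) := by
          congr 1; field_simp
  calc eLpNorm (s.indicator fun ω => φ (u i ω)) p P
      ≤ eLpNorm ((s.indicator fun _ => C) + (s.indicator fun ω => C * ‖u i ω‖)) p P :=
        eLpNorm_mono hpt
    _ ≤ eLpNorm (s.indicator fun _ : Ω => C) p P
        + eLpNorm (s.indicator fun ω => C * ‖u i ω‖) p P := by
        refine eLpNorm_add_le ?_ ?_ hp1
        · exact aestronglyMeasurable_const.indicator hs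
        · exact (((hu i).norm.const_mul C)).indicator hs
    _ ≤ ENNReal.ofReal (ε / 2) + ENNReal.ofReal (ε / 2) :=
        add_le_add (h₁ i s hs hμ1) hsmul
    _ = ENNReal.ofReal ε := by
        rw [← ENNReal.ofReal_add (by positivity) (by positivity)]; ring_nf

/-- Sequential continuity of the Nemytskii operator on `Lp`. -/
lemma tendsto_nemytskii_toLp [IsFiniteMeasure P] [Fact (1 ≤ p)] (hp2 : p ≠ ∞)
    {φ : ℝ → ℝ} (hφ : Continuous φ) {C : ℝ} (hC : 0 < C)
    (hg : ∀ x, |φ x| ≤ C * (1 + |x|))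
    {f : ℕ → Lp ℝ p P} {f₀ : Lp ℝ p P} (hf : Filter.Tendsto f atTop (𝓝 f₀)) :
    Filter.Tendsto (fun n => (memLp_comp_growth hφ hC.le hg (Lp.memLp (f n))).toLp
        (fun ω => φ ((f n : Ω → ℝ) ω))) atTop
      (𝓝 ((memLp_comp_growth hφ hC.le hg (Lp.memLp f₀)).toLp
        (fun ω => φ ((f₀ : Ω → ℝ) ω)))) := by
  have hp1 : 1 ≤ p := Fact.out
  have hp0 : p ≠ 0 := (lt_of_lt_of_le zero_lt_one hp1).ne'
  have hsn : Tendsto (fun n => eLpNorm (⇑(f n) - ⇑f₀) p P) atTop (𝓝 0) :=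
    (Lp.tendsto_Lp_iff_tendsto_eLpNorm' _ _).1 hf
  have htim0 : TendstoInMeasure P (fun n => ⇑(f n)) atTop ⇑f₀ :=
    tendstoInMeasure_of_tendsto_eLpNorm hp0 (fun n => Lp.aestronglyMeasurable _)
      (Lp.aestronglyMeasurable _) hsn
  have htim : TendstoInMeasure P (fun n ω => φ ((f n : Ω → ℝ) ω)) atTop
      (fun ω => φ ((f₀ : Ω → ℝ) ω)) :=
    tendstoInMeasure_comp_continuous hφ (fun n => Lp.aestronglyMeasurable _) htim0
  have hui : UnifIntegrable (fun n ω => φ ((f n : Ω → ℝ) ω)) p P :=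
    unifIntegrable_comp_growth hp1 hp2 hC hg (fun n => Lp.aestronglyMeasurable _)
      (unifIntegrable_of_tendsto_Lp hp1 hp2 (fun n => Lp.memLp _) (Lp.memLp _) hsn)
  have main : Tendsto (fun n => eLpNorm ((fun ω => φ ((f n : Ω → ℝ) ω))
      - fun ω => φ ((f₀ : Ω → ℝ) ω)) p P) atTop (𝓝 0) :=
    tendsto_Lp_finite_of_tendstoInMeasure hp1 hp2
      (fun n => hφ.comp_aestronglyMeasurable (Lp.aestronglyMeasurable _))
      (memLp_comp_growth hφ hC.le hg (Lp.memLp f₀)) hui htim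
  rw [tendsto_iff_dist_tendsto_zero]
  have hdist : ∀ n, dist ((memLp_comp_growth hφ hC.le hg (Lp.memLp (f n))).toLp
        (fun ω => φ ((f n : Ω → ℝ) ω)))
      ((memLp_comp_growth hφ hC.le hg (Lp.memLp f₀)).toLp (fun ω => φ ((f₀ : Ω → ℝ) ω)))
      = (eLpNorm ((fun ω => φ ((f n : Ω → ℝ) ω)) - fun ω => φ ((f₀ : Ω → ℝ) ω)) p P).toReal := by
    intro n
    rw [Lp.dist_def]
    congr 1
    apply eLpNorm_congr_ae
    filter_upwards [MemLp.coeFn_toLp (memLp_comp_growth hφ hC.le hg (Lp.memLp (f n))),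
      MemLp.coeFn_toLp (memLp_comp_growth hφ hC.le hg (Lp.memLp f₀))] with ω h1 h2
    simp only [Pi.sub_apply, h1, h2]
  simp only [hdist]
  have := (ENNReal.tendsto_toReal (by simp : (0:ℝ≥0∞) ≠ ⊤)).comp main
  exact this

/-- Measurability criterion for maps into a second-countable metric space. -/
lemma measurable_of_measurable_dist' {E X : Type*} [MeasurableSpace E] [MetricSpace X]
    [SecondCountableTopology X] [MeasurableSpace X] [BorelSpace X]
    {F : E → X} (h : ∀ g : X, Measurable fun e => dist (F e) g) : Measurable F := by
  refine measurable_of_isOpen fun U hU => ?_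
  obtain ⟨D, hDc, hDd⟩ := TopologicalSpace.exists_countable_dense X
  haveI : Countable D := hDc.to_subtype
  have hset : F ⁻¹' U = ⋃ (i : D × ℚ) (_ : Metric.ball (i.1 : X) (i.2 : ℝ) ⊆ U),
      {e | dist (F e) (i.1 : X) < (i.2 : ℝ)} := by
    ext e
    simp only [Set.mem_preimage, Set.mem_iUnion, Set.mem_setOf_eq]
    constructor
    · intro he
      obtain ⟨r, hr, hball⟩ := Metric.isOpen_iff.1 hU (F e) he
      obtain ⟨q, hq0, hqr⟩ := exists_rat_btwn (half_pos hr)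
      obtain ⟨g, hgD, hgd⟩ := hDd.exists_dist_lt (F e) hq0
      refine ⟨⟨⟨g, hgD⟩, q⟩, fun y hy => hball ?_, hgd⟩
      rw [Metric.mem_ball] at hy ⊢
      calc dist y (F e) ≤ dist y g + dist g (F e) := dist_triangle _ _ _
        _ < q + q := by
            rw [dist_comm g (F e)]; exact add_lt_add hy hgd
        _ < r := by linarith
    · rintro ⟨⟨g, q⟩, hsub, hlt⟩
      exact hsub (Metric.mem_ball.2 hlt)
  rw [hset]
  refine MeasurableSet.iUnion fun i => MeasurableSet.iUnion fun _ => ?_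
  exact (h (i.1 : X)) measurableSet_Iio

/-- Composition with a simple function is measurable when each section is. -/
lemma measurable_comp_simpleFunc {E γ X : Type*} [MeasurableSpace E] [MeasurableSpace X]
    {g : E → γ → X} (hg : ∀ b, Measurable fun e => g e b) (s : SimpleFunc E γ) :
    Measurable fun e => g e (s e) := by
  intro A hA
  have hset : (fun e => g e (s e)) ⁻¹' A
      = ⋃ b ∈ s.range, (s ⁻¹' {b}) ∩ ((fun e => g e b) ⁻¹' A) := by
    ext e
    simp only [Set.mem_preimage, Set.mem_iUnion, Set.mem_inter_iff, Set.mem_singleton_iff]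
    constructor
    · intro he
      exact ⟨s e, s.mem_range_self e, rfl, he⟩
    · rintro ⟨b, -, rfl, hb⟩
      exact hb
  rw [hset]
  exact (s.range).measurableSet_biUnion fun b _ =>
    (s.measurableSet_fiber b).inter ((hg b) hA)

/-- For fixed measurable representatives `f g`, the parametrized `eLpNorm` is measurable. -/
lemma measurable_eLpNorm_param [IsFiniteMeasure P] (hp0 : p ≠ 0) (hp2 : p ≠ ∞)
    {ρ : E → ℝ → ℝ} (hρ : Measurable fun q : E × ℝ => ρ q.1 q.2)
    {f g : Ω → ℝ} (hf : Measurable f) (hg : Measurable g) :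
    Measurable fun e => eLpNorm (fun ω => ρ e (f ω) - g ω) p P := by
  have hjoint : Measurable fun q : E × Ω => ρ q.1 (f q.2) - g q.2 :=
    (hρ.comp (measurable_fst.prodMk (hf.comp measurable_snd))).sub (hg.comp measurable_snd)
  have hout : Measurable fun e => ∫⁻ ω, (‖ρ e (f ω) - g ω‖₊ : ℝ≥0∞) ^ p.toReal ∂P :=
    Measurable.lintegral_prod_right (hjoint.enorm.pow_const _)
  have : (fun e => eLpNorm (fun ω => ρ e (f ω) - g ω) p P)
      = fun e => (∫⁻ ω, (‖ρ e (f ω) - g ω‖₊ : ℝ≥0∞) ^ p.toReal ∂P) ^ (1 / p.toReal) := by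
    funext e
    rw [eLpNorm_eq_lintegral_rpow_enorm_toReal hp0 hp2]
    simp only [enorm_eq_nnnorm]
  rw [this]
  exact (ENNReal.continuous_rpow_const.measurable).comp hout

end Helpers

/-- Let `Ω` be a Polish space with a Borel probability measure `P`,
`(E, Σ)` a measurable space, `1 ≤ p < ∞`. Suppose `ρ : E × ℝ → ℝ` is continuous in
the second variable, measurable in the first, and of uniform linear growth. Then for
any Borel-measurable `X : E → L^p(Ω)`, for each `e` the function
`ω ↦ ρ(e, X(e)(ω))` lies in `L^p(Ω)` and the map `e ↦ [ω ↦ ρ(e, X(e)(ω))]` into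
`L^p(Ω)` is measurable. -/
theorem measurable_comp_Lp
    {Ω : Type*} [TopologicalSpace Ω] [PolishSpace Ω] [MeasurableSpace Ω] [BorelSpace Ω]
    (P : Measure Ω) [IsProbabilityMeasure P]
    {E : Type*} [MeasurableSpace E]
    {p : ℝ≥0∞} [Fact (1 ≤ p)] (hp2 : p ≠ ⊤)
    (ρ : E → ℝ → ℝ)
    (hcont : ∀ e : E, Continuous fun x : ℝ => ρ e x)
    (hmeas : ∀ x : ℝ, Measurable fun e : E => ρ e x)
    (C : ℝ) (hC : 0 < C)
    (hgrowth : ∀ (e : E) (x : ℝ), |ρ e x| ≤ C * (1 + |x|))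
    (X : E → Lp ℝ p P)
    (hX : @Measurable E (Lp ℝ p P) _ (borel (Lp ℝ p P)) X) :
    ∃ hmem : ∀ e : E, MemLp (fun ω : Ω => ρ e ((X e : Ω → ℝ) ω)) p P,
      @Measurable E (Lp ℝ p P) _ (borel (Lp ℝ p P))
        (fun e : E => (hmem e).toLp (fun ω : Ω => ρ e ((X e : Ω → ℝ) ω))) := by
  letI : MeasurableSpace (Lp ℝ p P) := borel (Lp ℝ p P)
  haveI : BorelSpace (Lp ℝ p P) := ⟨rfl⟩
  haveI : Fact (p ≠ ∞) := ⟨hp2⟩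
  have hp1 : 1 ≤ p := Fact.out
  have hp0 : p ≠ 0 := (lt_of_lt_of_le zero_lt_one hp1).ne'
  -- joint measurability of ρ (Carathéodory)
  have hρ : Measurable fun q : E × ℝ => ρ q.1 q.2 := by
    have h := measurable_uncurry_of_continuous_of_measurable
      (u := fun (x : ℝ) (e : E) => ρ e x) hcont hmeas
    exact h.comp measurable_swap
  refine ⟨fun e => memLp_comp_growth (hcont e) hC.le (hgrowth e) (Lp.memLp (X e)), ?_⟩
  -- the Nemytskii-type operator
  set Φ : E → Lp ℝ p P → Lp ℝ p P := fun e f =>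
    (memLp_comp_growth (hcont e) hC.le (hgrowth e) (Lp.memLp f)).toLp
      (fun ω => ρ e ((f : Ω → ℝ) ω)) with hΦ
  -- measurability in `e` for each fixed `f`
  have hΦmeas : ∀ f : Lp ℝ p P, Measurable fun e => Φ e f := by
    intro f
    apply measurable_of_measurable_dist'
    intro g
    have hf' : Measurable ((Lp.aestronglyMeasurable f).mk ⇑f) :=
      (Lp.aestronglyMeasurable f).stronglyMeasurable_mk.measurable
    have hg' : Measurable ((Lp.aestronglyMeasurable g).mk ⇑g) :=
      (Lp.aestronglyMeasurable g).stronglyMeasurable_mk.measurable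
    have key : (fun e => dist (Φ e f) g) = fun e =>
        (eLpNorm (fun ω => ρ e ((Lp.aestronglyMeasurable f).mk ⇑f ω)
          - (Lp.aestronglyMeasurable g).mk ⇑g ω) p P).toReal := by
      funext e
      rw [Lp.dist_def]
      congr 1
      apply eLpNorm_congr_ae
      filter_upwards [MemLp.coeFn_toLp
          (memLp_comp_growth (hcont e) hC.le (hgrowth e) (Lp.memLp f)),
        (Lp.aestronglyMeasurable f).ae_eq_mk, (Lp.aestronglyMeasurable g).ae_eq_mk]
        with ω h1 h2 h3
      simp only [Pi.sub_apply, hΦ, h1, ← h2, ← h3]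
    rw [key]
    exact (measurable_eLpNorm_param hp0 hp2 hρ hf' hg').ennreal_toReal
  -- approximation of X by simple functions
  have hXsm : StronglyMeasurable X := hX.stronglyMeasurable
  have hGn : ∀ n, Measurable fun e => Φ e ((hXsm.approx n) e) := fun n =>
    measurable_comp_simpleFunc hΦmeas _
  have htend : ∀ e, Filter.Tendsto (fun n => Φ e ((hXsm.approx n) e)) Filter.atTop
      (𝓝 (Φ e (X e))) := fun e =>
    tendsto_nemytskii_toLp hp2 (hcont e) hC (hgrowth e) (hXsm.tendsto_approx e)
  exact measurable_of_tendsto_metrizable' Filter.atTop hGn (tendsto_pi_nhds.2 htend)
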